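/- Let a, b, c, x, y be positive integers with x ≤ a, x ≤ b, x ≤ c, y ≤ a, y ≤ b, and y ≤ c. Then the words axbyc and aybxc (with letter sequences (a,x,b,y,c) and (a,y,b,x,c)) are strongly Wilf equivalent: for all n, m, j ∈ ℕ, the number of words w with |w| = n, ‖w‖ = m, and exactly j embeddings of axbyc equals the number of words w with |w| = n, ‖w‖ = m, and exactly j embeddings of aybxc. -/

import Mathlib

/-- The `n`-th letter (1-indexed) of a word `u`, with the convention that
letters outside the range `{1, …, |u|}` are `0`. -/
def letter (u : List ℕ) (n : ℤ) : ℕ :=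
  if 1 ≤ n then u.getD (n - 1).toNat 0 else 0

/-- A word over the positive integers: every letter is positive. -/
def IsWord (w : List ℕ) : Prop := ∀ x ∈ w, 0 < x

/-- `u` embeds in `w` at (1-indexed) position `i`:
`1 ≤ i ≤ |w| - |u| + 1` and `u_j ≤ w_{i+j-1}` for all `1 ≤ j ≤ |u|`. -/
def EmbedsAt (u w : List ℕ) (i : ℕ) : Prop :=
  1 ≤ i ∧ i + u.length ≤ w.length + 1 ∧
    ∀ j ∈ Finset.Icc 1 u.length, letter u (j : ℤ) ≤ letter w ((i : ℤ) + (j : ℤ) - 1)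

instance (u w : List ℕ) : DecidablePred (EmbedsAt u w) := fun i => by
  unfold EmbedsAt; infer_instance

/-- `η_u(w)`: the number of positions at which `u` embeds in `w`. -/
def eta (u w : List ℕ) : ℕ :=
  ((Finset.Icc 1 (w.length + 1 - u.length)).filter (EmbedsAt u w)).card

/-- Strong Wilf equivalence: for all `n m j`, the number of words of length `n`,
sum `m`, and exactly `j` embeddings of `u` equals that for `v`. -/
def StronglyWilfEquiv (u v : List ℕ) : Prop :=
  ∀ n m j : ℕ,
    {w : List ℕ | IsWord w ∧ w.length = n ∧ w.sum = m ∧ eta u w = j}.ncard =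
    {w : List ℕ | IsWord w ∧ w.length = n ∧ w.sum = m ∧ eta v w = j}.ncard

/-- `w` avoids `u`: there is no position at which `u` embeds in `w`. -/
def Avoids (u w : List ℕ) : Prop := ∀ i : ℕ, ¬ EmbedsAt u w i

/-- Wilf equivalence: for all `n m`, the number of words of length `n` and
sum `m` avoiding `u` equals that for `v`. -/
def WilfEquiv (u v : List ℕ) : Prop :=
  ∀ n m : ℕ,
    {w : List ℕ | IsWord w ∧ w.length = n ∧ w.sum = m ∧ Avoids u w}.ncard =
    {w : List ℕ | IsWord w ∧ w.length = n ∧ w.sum = m ∧ Avoids v w}.ncard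

/-- `v` is the rigid shift of `u` at height `h ≥ 1` by the integer `k`. -/
def IsRigidShift (u v : List ℕ) (h : ℕ) (k : ℤ) : Prop :=
  1 ≤ h ∧ v.length = u.length ∧
  (∀ n : ℤ, h < letter u n → 1 ≤ n + k ∧ n + k ≤ (u.length : ℤ) ∧ h ≤ letter u (n + k)) ∧
  (∀ n : ℤ, 1 ≤ n → n ≤ (v.length : ℤ) →
    letter v n = min h (letter u n) + (letter u (n - k) - h))

/-- Shift equivalence: the smallest equivalence relation relating every word to
its reversal and to each of its rigid shifts. -/
def ShiftEquiv (u v : List ℕ) : Prop :=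
  Relation.EqvGen (fun a b => b = a.reverse ∨ ∃ (h : ℕ) (k : ℤ), IsRigidShift a b h k) u v


/- ### Auxiliary development for Statement 12 -/

open Finset

def Lw (w : List ℕ) (p : ℕ) : ℕ := w.getD (p - 1) 0

lemma letter_toNat (w : List ℕ) (z : ℤ) (hz : 1 ≤ z) : letter w z = Lw w z.toNat := by
  unfold letter Lw
  rw [if_pos hz]
  congr 1
  omega

lemma letter_shift (w : List ℕ) (i j : ℕ) (hi : 1 ≤ i) (hj : 1 ≤ j) :
    letter w ((i : ℤ) + (j : ℤ) - 1) = Lw w (i + j - 1) := by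
  rw [letter_toNat w _ (by omega)]
  congr 1
  omega

lemma letter_pat (u : List ℕ) (j : ℕ) (hj : 1 ≤ j) : letter u (j : ℤ) = Lw u j := by
  rw [letter_toNat u _ (by omega)]
  simp

lemma forall_Icc5 (P : ℕ → Prop) :
    (∀ j ∈ Finset.Icc 1 5, P j) ↔ P 1 ∧ P 2 ∧ P 3 ∧ P 4 ∧ P 5 := by
  constructor
  · intro h
    exact ⟨h 1 (by decide), h 2 (by decide), h 3 (by decide), h 4 (by decide),
      h 5 (by decide)⟩
  · rintro ⟨h1, h2, h3, h4, h5⟩ j hj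
    simp only [Finset.mem_Icc] at hj
    obtain ⟨ha, hb⟩ := hj
    interval_cases j <;> assumption

lemma embedsAt_iff (α β γ δ ε : ℕ) (w : List ℕ) (i : ℕ) :
    EmbedsAt [α,β,γ,δ,ε] w i ↔ 1 ≤ i ∧ i + 5 ≤ w.length + 1 ∧
      α ≤ Lw w i ∧ β ≤ Lw w (i+1) ∧ γ ≤ Lw w (i+2) ∧ δ ≤ Lw w (i+3) ∧
      ε ≤ Lw w (i+4) := by
  unfold EmbedsAt
  have hlen : ([α,β,γ,δ,ε] : List ℕ).length = 5 := rfl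
  rw [hlen, forall_Icc5]
  constructor
  · rintro ⟨h1, h2, hc⟩
    obtain ⟨c1, c2, c3, c4, c5⟩ := hc
    rw [letter_shift w i 1 h1 (by norm_num), letter_pat _ 1 (by norm_num)] at c1
    rw [letter_shift w i 2 h1 (by norm_num), letter_pat _ 2 (by norm_num)] at c2
    rw [letter_shift w i 3 h1 (by norm_num), letter_pat _ 3 (by norm_num)] at c3
    rw [letter_shift w i 4 h1 (by norm_num), letter_pat _ 4 (by norm_num)] at c4
    rw [letter_shift w i 5 h1 (by norm_num), letter_pat _ 5 (by norm_num)] at c5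
    refine ⟨h1, h2, ?_, ?_, ?_, ?_, ?_⟩
    · rwa [show i + 1 - 1 = i by omega] at c1
    · rwa [show i + 2 - 1 = i + 1 by omega] at c2
    · rwa [show i + 3 - 1 = i + 2 by omega] at c3
    · rwa [show i + 4 - 1 = i + 3 by omega] at c4
    · rwa [show i + 5 - 1 = i + 4 by omega] at c5
  · rintro ⟨h1, h2, c1, c2, c3, c4, c5⟩
    refine ⟨h1, h2, ?_, ?_, ?_, ?_, ?_⟩
    · rw [letter_shift w i 1 h1 (by norm_num), letter_pat _ 1 (by norm_num),
        show i + 1 - 1 = i by omega]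
      exact c1
    · rw [letter_shift w i 2 h1 (by norm_num), letter_pat _ 2 (by norm_num),
        show i + 2 - 1 = i + 1 by omega]
      exact c2
    · rw [letter_shift w i 3 h1 (by norm_num), letter_pat _ 3 (by norm_num),
        show i + 3 - 1 = i + 2 by omega]
      exact c3
    · rw [letter_shift w i 4 h1 (by norm_num), letter_pat _ 4 (by norm_num),
        show i + 4 - 1 = i + 3 by omega]
      exact c4
    · rw [letter_shift w i 5 h1 (by norm_num), letter_pat _ 5 (by norm_num),
        show i + 5 - 1 = i + 4 by omega]
      exact c5

def allW : ℕ → ℕ → Finset (List ℕ)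
  | 0, m => if m = 0 then {[]} else ∅
  | (n+1), m => (Finset.Icc 1 m).biUnion (fun z => (allW n (m-z)).image (fun t => z :: t))

lemma mem_allW {n m : ℕ} {w : List ℕ} :
    w ∈ allW n m ↔ w.length = n ∧ w.sum = m ∧ IsWord w := by
  induction n generalizing m w with
  | zero =>
    simp only [allW]
    constructor
    · intro hw
      by_cases hm : m = 0
      · subst hm; simp at hw; subst hw; simp [IsWord]
      · simp [hm] at hw
    · rintro ⟨hl, hs, _⟩
      rw [List.length_eq_zero_iff] at hl; subst hl
      simp at hs; subst hs; simp
  | succ n ih =>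
    simp only [allW, Finset.mem_biUnion, Finset.mem_image, Finset.mem_Icc]
    constructor
    · rintro ⟨z, ⟨hz1, hz2⟩, t, ht, rfl⟩
      obtain ⟨hl, hs, hword⟩ := ih.mp ht
      refine ⟨by simp [hl], by simp [hs]; omega, ?_⟩
      intro q hq
      rcases List.mem_cons.mp hq with rfl | hq
      · omega
      · exact hword q hq
    · rintro ⟨hl, hs, hword⟩
      match w with
      | z :: t =>
        have hz : 0 < z := hword z List.mem_cons_self
        have hts : t.sum = m - z := by simp at hs; omega
        have hzm : z ≤ m := by simp at hs; omega
        exact ⟨z, ⟨hz, hzm⟩, t, ih.mpr ⟨by simpa using hl, hts,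
          fun q hq => hword q (List.mem_cons_of_mem _ hq)⟩, rfl⟩

lemma card_shift (S : Finset ℕ) (h0 : 0 ∉ S) (t : ℕ) (ht : 0 < t)
    (Φ Ψ : ℕ → Prop) [DecidablePred Φ] [DecidablePred Ψ]
    (hmap : ∀ i, i ∈ S → i - t ∈ S → (Φ i ↔ Ψ (i - t)))
    (hmap' : ∀ j, j ∈ S → j + t ∈ S → (Ψ j ↔ Φ (j + t))) :
    (S.filter (fun i => i - t ∈ S ∧ Φ i)).card =
    (S.filter (fun j => j + t ∈ S ∧ Ψ j)).card := by
  apply Finset.card_nbij' (fun i => i - t) (fun j => j + t)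
  · intro i hi
    simp only [Finset.mem_coe, Finset.mem_filter] at hi ⊢
    obtain ⟨hiS, hitS, hΦ⟩ := hi
    have hit : t ≤ i := by
      by_contra hlt
      have : i - t = 0 := by omega
      rw [this] at hitS; exact h0 hitS
    refine ⟨hitS, by rw [show i - t + t = i by omega]; exact hiS, (hmap i hiS hitS).mp hΦ⟩
  · intro j hj
    simp only [Finset.mem_coe, Finset.mem_filter] at hj ⊢
    obtain ⟨hjS, hjtS, hΨ⟩ := hj
    exact ⟨hjtS, by rw [show j + t - t = j by omega]; exact hjS,
      (hmap' j hjS hjtS).mp hΨ⟩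
  · intro i hi
    simp only [Finset.mem_coe, Finset.mem_filter] at hi ⊢
    have : i - t ∈ S := hi.2.1
    have hit : t ≤ i := by
      by_contra hlt
      have : i - t = 0 := by omega
      rw [this] at hi; exact h0 hi.2.1
    omega
  · intro j hj; dsimp only; omega

lemma sum_getD (w : List ℕ) :
    ∑ k ∈ Finset.range w.length, w.getD k 0 = w.sum := by
  induction w with
  | nil => simp
  | cons z t ih =>
    rw [List.length_cons, Finset.sum_range_succ']
    simp only [List.getD_cons_succ, List.getD_cons_zero, List.sum_cons]
    rw [ih]; ring

lemma Icc_sum (f : ℕ → ℕ) (n : ℕ) :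
    ∑ p ∈ Finset.Icc 1 n, f p = ∑ k ∈ Finset.range n, f (k+1) := by
  apply Finset.sum_nbij' (fun p => p - 1) (fun k => k + 1)
  · intro p hp; simp only [Finset.mem_Icc] at hp; simp only [Finset.mem_range]; omega
  · intro k hk; simp only [Finset.mem_range] at hk; simp only [Finset.mem_Icc]; omega
  · intro p hp; simp only [Finset.mem_Icc] at hp; omega
  · intro k _; omega
  · intro p hp; simp only [Finset.mem_Icc] at hp
    congr 1; omega

lemma sum_Lw {w : List ℕ} {n : ℕ} (hw : w.length = n) :
    ∑ k ∈ Finset.range n, Lw w (k+1) = w.sum := by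
  rw [← sum_getD w, hw]
  apply Finset.sum_congr rfl
  intro k _
  rfl

lemma Lw_ofFn {n : ℕ} (f : Fin n → ℕ) {p : ℕ} (h1 : 1 ≤ p) (h2 : p ≤ n) :
    Lw (List.ofFn f) p = f ⟨p - 1, by omega⟩ := by
  unfold Lw
  have hlt : p - 1 < (List.ofFn f).length := by simp; omega
  rw [List.getD_eq_getElem _ _ hlt, List.getElem_ofFn]

lemma ofFn_Lw {w : List ℕ} {n : ℕ} (hw : w.length = n) :
    List.ofFn (fun k : Fin n => Lw w ((k : ℕ) + 1)) = w := by
  apply List.ext_getElem (by simp [hw])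
  intro i h1 h2
  rw [List.getElem_ofFn]
  unfold Lw
  simp only [Nat.add_sub_cancel]
  rw [List.getD_eq_getElem _ _ h2]

instance instDomDec (n : ℕ) (d : ℕ → ℕ) :
    DecidablePred (fun w => ∀ p ∈ Finset.Icc 1 n, d p ≤ Lw w p) :=
  fun _ => Finset.decidableDforallFinset

lemma count_eq (n m : ℕ) (d d' : ℕ → ℕ) (hd : ∀ p, 1 ≤ d p) (hd' : ∀ p, 1 ≤ d' p)
    (hsum : ∑ p ∈ Finset.Icc 1 n, d p = ∑ p ∈ Finset.Icc 1 n, d' p) :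
    ((allW n m).filter (fun w => ∀ p ∈ Finset.Icc 1 n, d p ≤ Lw w p)).card =
    ((allW n m).filter (fun w => ∀ p ∈ Finset.Icc 1 n, d' p ≤ Lw w p)).card := by
  -- generic membership fact
  have key : ∀ (e e' : ℕ → ℕ), (∀ p, 1 ≤ e p) → (∀ p, 1 ≤ e' p) →
      (∑ p ∈ Finset.Icc 1 n, e p = ∑ p ∈ Finset.Icc 1 n, e' p) →
      ∀ w ∈ (allW n m).filter (fun w => ∀ p ∈ Finset.Icc 1 n, e p ≤ Lw w p),
        (List.ofFn (fun k : Fin n => Lw w ((k:ℕ)+1) - e ((k:ℕ)+1) + e' ((k:ℕ)+1))) ∈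
          (allW n m).filter (fun w => ∀ p ∈ Finset.Icc 1 n, e' p ≤ Lw w p) := by
    intro e e' he he' hee w hw
    rw [Finset.mem_filter, mem_allW] at hw
    obtain ⟨⟨hlen, hsumw, hword⟩, hdom⟩ := hw
    have hLe : ∀ k, k < n → e (k+1) ≤ Lw w (k+1) := by
      intro k hk
      exact hdom (k+1) (Finset.mem_Icc.mpr ⟨by omega, by omega⟩)
    rw [Finset.mem_filter, mem_allW]
    refine ⟨⟨by simp, ?_, ?_⟩, ?_⟩
    · -- sum
      rw [List.sum_ofFn,
        Fin.sum_univ_eq_sum_range (fun k => Lw w (k+1) - e (k+1) + e' (k+1)) n,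
        Finset.sum_add_distrib,
        Finset.sum_tsub_distrib _ (fun k hk => hLe k (Finset.mem_range.mp hk)),
        sum_Lw hlen, hsumw, ← Icc_sum, ← Icc_sum]
      have hle : ∑ p ∈ Finset.Icc 1 n, e p ≤ m := by
        calc ∑ p ∈ Finset.Icc 1 n, e p ≤ ∑ p ∈ Finset.Icc 1 n, Lw w p :=
              Finset.sum_le_sum (fun p hp => hdom p hp)
          _ = m := by rw [Icc_sum, sum_Lw hlen, hsumw]
      omega
    · -- IsWord
      intro q hq
      rw [List.mem_ofFn] at hq
      obtain ⟨k, rfl⟩ := hq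
      have := he' ((k:ℕ)+1)
      omega
    · -- dominance by e'
      intro p hp
      rw [Finset.mem_Icc] at hp
      rw [Lw_ofFn _ hp.1 hp.2]
      simp only
      rw [show p - 1 + 1 = p by omega]
      omega
  apply Finset.card_bij'
    (fun w _ => List.ofFn (fun k : Fin n => Lw w ((k:ℕ)+1) - d ((k:ℕ)+1) + d' ((k:ℕ)+1)))
    (fun w _ => List.ofFn (fun k : Fin n => Lw w ((k:ℕ)+1) - d' ((k:ℕ)+1) + d ((k:ℕ)+1)))
    (fun w hw => key d d' hd hd' hsum w hw)
    (fun w hw => key d' d hd' hd hsum.symm w hw)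
  · intro w hw
    rw [Finset.mem_filter, mem_allW] at hw
    obtain ⟨⟨hlen, hsumw, hword⟩, hdom⟩ := hw
    have hLe : ∀ k, k < n → d (k+1) ≤ Lw w (k+1) := by
      intro k hk
      exact hdom (k+1) (Finset.mem_Icc.mpr ⟨by omega, by omega⟩)
    conv_rhs => rw [← ofFn_Lw hlen]
    congr 1
    funext k
    rw [Lw_ofFn _ (by omega) (by omega)]
    simp only [Nat.add_sub_cancel]
    have := hLe k k.2
    omega
  · intro w hw
    rw [Finset.mem_filter, mem_allW] at hw
    obtain ⟨⟨hlen, hsumw, hword⟩, hdom⟩ := hw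
    have hLe : ∀ k, k < n → d' (k+1) ≤ Lw w (k+1) := by
      intro k hk
      exact hdom (k+1) (Finset.mem_Icc.mpr ⟨by omega, by omega⟩)
    conv_rhs => rw [← ofFn_Lw hlen]
    congr 1
    funext k
    rw [Lw_ofFn _ (by omega) (by omega)]
    simp only [Nat.add_sub_cancel]
    have := hLe k k.2
    omega

def dd (P0 P1 P2 P3 P4 : ℕ) (S : Finset ℕ) (p : ℕ) : ℕ :=
  max 1 (max (if p ∈ S then P0 else 0) (max (if p-1 ∈ S then P1 else 0)
    (max (if p-2 ∈ S then P2 else 0) (max (if p-3 ∈ S then P3 else 0)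
      (if p-4 ∈ S then P4 else 0)))))

lemma one_le_dd (P0 P1 P2 P3 P4 : ℕ) (S : Finset ℕ) (p : ℕ) :
    1 ≤ dd P0 P1 P2 P3 P4 S p := le_max_left _ _

lemma one_le_Lw {w : List ℕ} (hword : IsWord w) {p : ℕ} (h1 : 1 ≤ p)
    (h2 : p ≤ w.length) : 1 ≤ Lw w p := by
  unfold Lw
  have hlt : p - 1 < w.length := by omega
  rw [List.getD_eq_getElem _ _ hlt]
  exact hword _ (List.getElem_mem hlt)

lemma dd_le {P0 P1 P2 P3 P4 : ℕ} {S : Finset ℕ} {p : ℕ} {L : ℕ} (h1 : 1 ≤ L)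
    (h0 : p ∈ S → P0 ≤ L) (hh1 : p-1 ∈ S → P1 ≤ L) (hh2 : p-2 ∈ S → P2 ≤ L)
    (hh3 : p-3 ∈ S → P3 ≤ L) (hh4 : p-4 ∈ S → P4 ≤ L) :
    dd P0 P1 P2 P3 P4 S p ≤ L := by
  unfold dd
  refine max_le h1 (max_le ?_ (max_le ?_ (max_le ?_ (max_le ?_ ?_)))) <;>
    split_ifs with h <;> first | exact Nat.zero_le L | solve_by_elim

lemma le_dd_0 {P0 P1 P2 P3 P4 : ℕ} {S : Finset ℕ} {p : ℕ} (h : p ∈ S) :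
    P0 ≤ dd P0 P1 P2 P3 P4 S p := by
  unfold dd; rw [if_pos h]
  exact le_trans (le_max_left _ _) (le_max_right _ _)
lemma le_dd_1 {P0 P1 P2 P3 P4 : ℕ} {S : Finset ℕ} {p : ℕ} (h : p-1 ∈ S) :
    P1 ≤ dd P0 P1 P2 P3 P4 S p := by
  unfold dd; rw [if_pos h]
  exact le_trans (le_trans (le_max_left _ _) (le_max_right _ _)) (le_max_right _ _)
lemma le_dd_2 {P0 P1 P2 P3 P4 : ℕ} {S : Finset ℕ} {p : ℕ} (h : p-2 ∈ S) :
    P2 ≤ dd P0 P1 P2 P3 P4 S p := by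
  unfold dd; rw [if_pos h]
  exact le_trans (le_trans (le_trans (le_max_left _ _) (le_max_right _ _))
    (le_max_right _ _)) (le_max_right _ _)
lemma le_dd_3 {P0 P1 P2 P3 P4 : ℕ} {S : Finset ℕ} {p : ℕ} (h : p-3 ∈ S) :
    P3 ≤ dd P0 P1 P2 P3 P4 S p := by
  unfold dd; rw [if_pos h]
  exact le_trans (le_trans (le_trans (le_trans (le_max_left _ _) (le_max_right _ _))
    (le_max_right _ _)) (le_max_right _ _)) (le_max_right _ _)
lemma le_dd_4 {P0 P1 P2 P3 P4 : ℕ} {S : Finset ℕ} {p : ℕ} (h : p-4 ∈ S) :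
    P4 ≤ dd P0 P1 P2 P3 P4 S p := by
  unfold dd; rw [if_pos h]
  exact le_trans (le_trans (le_trans (le_trans (le_max_right _ _) (le_max_right _ _))
    (le_max_right _ _)) (le_max_right _ _)) (le_max_right _ _)

lemma dominate_iff (P0 P1 P2 P3 P4 n : ℕ) (S : Finset ℕ)
    (hS : S ⊆ Finset.Icc 1 (n-4))
    (w : List ℕ) (hw : w.length = n) (hword : IsWord w) :
    (∀ i ∈ S, EmbedsAt [P0,P1,P2,P3,P4] w i) ↔
      (∀ p ∈ Finset.Icc 1 n, dd P0 P1 P2 P3 P4 S p ≤ Lw w p) := by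
  constructor
  · intro hall p hp
    rw [Finset.mem_Icc] at hp
    apply dd_le (one_le_Lw hword hp.1 (by omega))
    · intro h
      have hb := Finset.mem_Icc.mp (hS h)
      have := (embedsAt_iff P0 P1 P2 P3 P4 w p).mp (hall p h)
      exact this.2.2.1
    · intro h
      have hb := Finset.mem_Icc.mp (hS h)
      have := (embedsAt_iff P0 P1 P2 P3 P4 w (p-1)).mp (hall _ h)
      have e : p - 1 + 1 = p := by omega
      rw [e] at this
      exact this.2.2.2.1
    · intro h
      have hb := Finset.mem_Icc.mp (hS h)
      have := (embedsAt_iff P0 P1 P2 P3 P4 w (p-2)).mp (hall _ h)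
      have e : p - 2 + 2 = p := by omega
      rw [e] at this
      exact this.2.2.2.2.1
    · intro h
      have hb := Finset.mem_Icc.mp (hS h)
      have := (embedsAt_iff P0 P1 P2 P3 P4 w (p-3)).mp (hall _ h)
      have e : p - 3 + 3 = p := by omega
      rw [e] at this
      exact this.2.2.2.2.2.1
    · intro h
      have hb := Finset.mem_Icc.mp (hS h)
      have := (embedsAt_iff P0 P1 P2 P3 P4 w (p-4)).mp (hall _ h)
      have e : p - 4 + 4 = p := by omega
      rw [e] at this
      exact this.2.2.2.2.2.2
  · intro hdom i hi
    have hb := Finset.mem_Icc.mp (hS hi)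
    have hn5 : i + 4 ≤ n := by omega
    rw [embedsAt_iff]
    refine ⟨hb.1, by omega, ?_, ?_, ?_, ?_, ?_⟩
    · exact le_trans (le_dd_0 hi) (hdom i (Finset.mem_Icc.mpr (by omega)))
    · refine le_trans (le_dd_1 (P0 := P0) (P1 := P1) (P2 := P2) (P3 := P3)
        (P4 := P4) (p := i+1) ?_) (hdom (i+1) (Finset.mem_Icc.mpr (by omega)))
      rw [show i+1-1 = i by omega]; exact hi
    · refine le_trans (le_dd_2 (P0 := P0) (P1 := P1) (P2 := P2) (P3 := P3)
        (P4 := P4) (p := i+2) ?_) (hdom (i+2) (Finset.mem_Icc.mpr (by omega)))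
      rw [show i+2-2 = i by omega]; exact hi
    · refine le_trans (le_dd_3 (P0 := P0) (P1 := P1) (P2 := P2) (P3 := P3)
        (P4 := P4) (p := i+3) ?_) (hdom (i+3) (Finset.mem_Icc.mpr (by omega)))
      rw [show i+3-3 = i by omega]; exact hi
    · refine le_trans (le_dd_4 (P0 := P0) (P1 := P1) (P2 := P2) (P3 := P3)
        (P4 := P4) (p := i+4) ?_) (hdom (i+4) (Finset.mem_Icc.mpr (by omega)))
      rw [show i+4-4 = i by omega]; exact hi

section
variable (S : Finset ℕ)

lemma shift_mem (h0 : 0 ∉ S) (t : ℕ) :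
    (S.filter (fun i => i - t ∈ S)).card = (S.filter (fun i => i + t ∈ S)).card := by
  apply Finset.card_nbij' (fun i => i - t) (fun j => j + t)
  · intro i hi
    simp only [Finset.mem_coe, Finset.mem_filter] at hi ⊢
    have hit : t ≤ i := by by_contra h; have : i - t = 0 := by omega
                           rw [this] at hi; exact h0 hi.2
    exact ⟨hi.2, by rw [show i - t + t = i by omega]; exact hi.1⟩
  · intro j hj
    simp only [Finset.mem_coe, Finset.mem_filter] at hj ⊢
    exact ⟨hj.2, by rw [show j + t - t = j by omega]; exact hj.1⟩
  · intro i hi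
    simp only [Finset.mem_coe, Finset.mem_filter] at hi ⊢
    have hit : t ≤ i := by by_contra h; have : i - t = 0 := by omega
                           rw [this] at hi; exact h0 hi.2
    omega
  · intro j hj; dsimp only; omega

lemma cnt_notshift (h0 : 0 ∉ S) (t : ℕ) :
    (S.filter (fun i => i - t ∉ S)).card = (S.filter (fun i => i + t ∉ S)).card := by
  have h1 := Finset.card_filter_add_card_filter_not (s := S)
    (p := fun i => i - t ∈ S)
  have h2 := Finset.card_filter_add_card_filter_not (s := S)
    (p := fun i => i + t ∈ S)
  have h3 := shift_mem S h0 t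
  omega

lemma shift_mem2 (h0 : 0 ∉ S) :
    (S.filter (fun i => i - 2 ∈ S ∧ i - 4 ∈ S)).card =
    (S.filter (fun i => i + 2 ∈ S ∧ i + 4 ∈ S)).card := by
  apply Finset.card_nbij' (fun i => i - 4) (fun j => j + 4)
  · intro i hi
    simp only [Finset.mem_coe, Finset.mem_filter] at hi ⊢
    obtain ⟨hiS, hi2, hi4⟩ := hi
    have h2 : 2 ≤ i := by by_contra h; have : i - 2 = 0 := by omega
                          rw [this] at hi2; exact h0 hi2
    have h4 : 4 ≤ i := by by_contra h; have : i - 4 = 0 := by omega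
                          rw [this] at hi4; exact h0 hi4
    refine ⟨hi4, by rw [show i-4+2 = i-2 by omega]; exact hi2,
      by rw [show i-4+4 = i by omega]; exact hiS⟩
  · intro j hj
    simp only [Finset.mem_coe, Finset.mem_filter] at hj ⊢
    obtain ⟨hjS, hj2, hj4⟩ := hj
    refine ⟨hj4, by rw [show j+4-2 = j+2 by omega]; exact hj2,
      by rw [show j+4-4 = j by omega]; exact hjS⟩
  · intro i hi
    simp only [Finset.mem_coe, Finset.mem_filter] at hi ⊢
    have h4 : 4 ≤ i := by by_contra h; have : i - 4 = 0 := by omega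
                          rw [this] at hi; exact h0 hi.2.2
    omega
  · intro j hj; dsimp only; omega

lemma cnt1 (h0 : 0 ∉ S) :
    (S.filter (fun i => i-2 ∉ S ∧ i-4 ∉ S)).card =
    (S.filter (fun i => i+2 ∉ S ∧ i+4 ∉ S)).card := by
  have e1 : ∀ (f g : ℕ → ℕ) , True := fun _ _ => trivial
  -- inclusion-exclusion on both sides
  have incl : ∀ (P Q : ℕ → Prop) (_ : DecidablePred P) (_ : DecidablePred Q),
      (S.filter (fun i => ¬ P i ∧ ¬ Q i)).card + (S.filter P).card +
        (S.filter Q).card =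
      S.card + (S.filter (fun i => P i ∧ Q i)).card := by
    intro P Q hP hQ
    have h1 := Finset.card_filter_add_card_filter_not (s := S)
      (p := fun i => P i ∨ Q i)
    have h2 : (S.filter (fun i => P i ∨ Q i)).card +
        (S.filter (fun i => P i ∧ Q i)).card
        = (S.filter P).card + (S.filter Q).card := by
      rw [Finset.filter_or, Finset.filter_and]
      exact Finset.card_union_add_card_inter _ _
    have h3 : (S.filter (fun i => ¬ (P i ∨ Q i))).card =
        (S.filter (fun i => ¬ P i ∧ ¬ Q i)).card := by
      apply Finset.card_bij (fun a _ => a) <;> simp +contextual [not_or]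
    omega
  have i1 := incl (fun i => i-2 ∈ S) (fun i => i-4 ∈ S) inferInstance inferInstance
  have i2 := incl (fun i => i+2 ∈ S) (fun i => i+4 ∈ S) inferInstance inferInstance
  have t2 := shift_mem S h0 2
  have t4 := shift_mem S h0 4
  have t24 := shift_mem2 S h0
  omega

lemma cnt2 (h0 : 0 ∉ S) :
    (S.filter (fun i => i-2 ∈ S ∧ i-4 ∉ S)).card =
    (S.filter (fun i => i+2 ∈ S ∧ i+4 ∉ S)).card := by
  -- step 1: shift by 2 : {i ∈ S : i-2∈S, i-4∉S} ≃ {j ∈ S : j+2∈S, j-2∉S}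
  have step1 : (S.filter (fun i => i-2 ∈ S ∧ i-4 ∉ S)).card =
      (S.filter (fun j => j+2 ∈ S ∧ j-2 ∉ S)).card := by
    apply Finset.card_nbij' (fun i => i - 2) (fun j => j + 2)
    · intro i hi
      simp only [Finset.mem_coe, Finset.mem_filter] at hi ⊢
      obtain ⟨hiS, hi2, hi4⟩ := hi
      have h2 : 2 ≤ i := by by_contra h; have : i - 2 = 0 := by omega
                            rw [this] at hi2; exact h0 hi2
      refine ⟨hi2, by rw [show i-2+2 = i by omega]; exact hiS, ?_⟩
      intro hc; apply hi4
      rwa [show i-4 = i-2-2 by omega]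
    · intro j hj
      simp only [Finset.mem_coe, Finset.mem_filter] at hj ⊢
      obtain ⟨hjS, hj2, hjn⟩ := hj
      refine ⟨hj2, by rw [show j+2-2 = j by omega]; exact hjS, ?_⟩
      intro hc; apply hjn; rwa [show j+2-4 = j-2 by omega] at hc
    · intro i hi
      simp only [Finset.mem_coe, Finset.mem_filter] at hi ⊢
      have h2 : 2 ≤ i := by by_contra h; have : i - 2 = 0 := by omega
                            rw [this] at hi; exact h0 hi.2.1
      omega
    · intro j hj; dsimp only; omega
  rw [step1]
  -- step 2: within T = S.filter (·+2 ∈ S)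
  set T := S.filter (fun j => j + 2 ∈ S) with hT
  have h0T : 0 ∉ T := fun hc => h0 (Finset.mem_filter.mp hc).1
  have e1 : (S.filter (fun j => j+2 ∈ S ∧ j-2 ∉ S)).card =
      (T.filter (fun j => j - 2 ∉ T)).card := by
    congr 1
    ext j
    simp only [hT, Finset.mem_filter, and_assoc]
    constructor
    · rintro ⟨hjS, hj2, hjn⟩
      exact ⟨hjS, hj2, fun hc => hjn hc.1⟩
    · rintro ⟨hjS, hj2, hjn⟩
      refine ⟨hjS, hj2, fun hc => hjn ⟨hc, ?_⟩⟩
      have h2 : 2 ≤ j := by by_contra h; have : j - 2 = 0 := by omega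
                            rw [this] at hc; exact h0 hc
      rw [show j-2+2 = j by omega]; exact hjS
  have e2 : (S.filter (fun j => j+2 ∈ S ∧ j+4 ∉ S)).card =
      (T.filter (fun j => j + 2 ∉ T)).card := by
    congr 1
    ext j
    simp only [hT, Finset.mem_filter, and_assoc]
    constructor
    · rintro ⟨hjS, hj2, hjn⟩
      refine ⟨hjS, hj2, fun hc => hjn ?_⟩
      have := hc.2
      rwa [show j+2+2 = j+4 by omega] at this
    · rintro ⟨hjS, hj2, hjn⟩
      refine ⟨hjS, hj2, fun hc => hjn ⟨hj2, ?_⟩⟩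
      rw [show j+2+2 = j+4 by omega]; exact hc
  rw [e1, e2]
  exact cnt_notshift T h0T 2
end

lemma binom_inv (N : ℕ) (f g : ℕ → ℕ)
    (h : ∀ s, ∑ j ∈ Finset.range N, f j * (j.choose s) =
              ∑ j ∈ Finset.range N, g j * (j.choose s)) :
    ∀ j, j < N → f j = g j := by
  suffices H : ∀ k j, N - j ≤ k → j < N → f j = g j by
    intro j hj; exact H N j (by omega) hj
  intro k
  induction k with
  | zero => intro j h1 h2; omega
  | succ k ih =>
    intro j h1 hj
    have hmem : j ∈ Finset.range N := Finset.mem_range.mpr hj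
    have hsplit := h j
    rw [← Finset.sum_erase_add _ _ hmem, ← Finset.sum_erase_add
      (f := fun j' => g j' * (j'.choose j)) _ hmem] at hsplit
    have herase : ∑ j' ∈ (Finset.range N).erase j, f j' * (j'.choose j) =
        ∑ j' ∈ (Finset.range N).erase j, g j' * (j'.choose j) := by
      apply Finset.sum_congr rfl
      intro j' hj'
      have hj'N : j' < N := Finset.mem_range.mp (Finset.mem_of_mem_erase hj')
      have hne : j' ≠ j := Finset.ne_of_mem_erase hj'
      rcases lt_or_gt_of_ne hne with hlt | hgt
      · rw [Nat.choose_eq_zero_of_lt hlt, Nat.mul_zero, Nat.mul_zero]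
      · rw [ih j' (by omega) hj'N]
    rw [herase] at hsplit
    have := Nat.add_right_cancel ((add_comm _ _).trans
      (hsplit.trans (add_comm _ _)))
    simpa [Nat.choose_self] using this

open scoped Classical

noncomputable def kap (A b C : ℕ) (S : Finset ℕ) (p : ℕ) : ℕ :=
  (if p ∈ S ∧ (p-2 ∈ S ∧ p-4 ∉ S) then max b A else 0) +
  (if p ∈ S ∧ (p-2 ∉ S ∧ p-4 ∉ S) then A else 0) +
  (if p-4 ∈ S ∧ (p-2 ∈ S ∧ p ∉ S) then max b C else 0) +
  (if p-4 ∈ S ∧ (p-2 ∉ S ∧ p ∉ S) then C else 0)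

lemma class_L (S : Finset ℕ) (n : ℕ) (hS : S ⊆ Finset.Icc 1 (n-4))
    (Φ : ℕ → Prop) [DecidablePred Φ] :
    ((Finset.Icc 1 n).filter (fun p => p ∈ S ∧ Φ p)).card = (S.filter Φ).card := by
  congr 1
  ext p
  simp only [Finset.mem_filter, Finset.mem_Icc]
  constructor
  · rintro ⟨_, hp⟩; exact hp
  · rintro ⟨hp, hΦ⟩
    have := Finset.mem_Icc.mp (hS hp)
    exact ⟨⟨this.1, by omega⟩, hp, hΦ⟩

lemma class_R (S : Finset ℕ) (n : ℕ) (hS : S ⊆ Finset.Icc 1 (n-4))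
    (Ψ : ℕ → Prop) [DecidablePred Ψ] :
    ((Finset.Icc 1 n).filter (fun p => p-4 ∈ S ∧ Ψ p)).card =
    (S.filter (fun i => Ψ (i+4))).card := by
  apply Finset.card_nbij' (fun p => p - 4) (fun i => i + 4)
  · intro p hp
    simp only [Finset.mem_coe, Finset.mem_filter, Finset.mem_Icc] at hp ⊢
    obtain ⟨-, hp4, hΨ⟩ := hp
    have := Finset.mem_Icc.mp (hS hp4)
    refine ⟨hp4, ?_⟩
    rwa [show p - 4 + 4 = p by omega]
  · intro i hi
    simp only [Finset.mem_coe, Finset.mem_filter, Finset.mem_Icc] at hi ⊢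
    obtain ⟨hiS, hΨ⟩ := hi
    have := Finset.mem_Icc.mp (hS hiS)
    refine ⟨⟨by omega, by omega⟩, ?_, hΨ⟩
    rwa [show i + 4 - 4 = i by omega]
  · intro p hp
    simp only [Finset.mem_coe, Finset.mem_filter, Finset.mem_Icc] at hp ⊢
    have := Finset.mem_Icc.mp (hS hp.2.1)
    omega
  · intro i _; dsimp only; omega

lemma sum_ind (s : Finset ℕ) (c : ℕ → Prop) [DecidablePred c] (v : ℕ) :
    ∑ p ∈ s, (if c p then v else 0) = (s.filter c).card * v := by
  rw [← Finset.sum_filter, Finset.sum_const, smul_eq_mul]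

lemma sum_kap (n A b C : ℕ) (S : Finset ℕ) (hS : S ⊆ Finset.Icc 1 (n-4)) :
    ∑ p ∈ Finset.Icc 1 n, kap A b C S p =
      (S.filter (fun i => i-2 ∈ S ∧ i-4 ∉ S)).card * max b A +
      (S.filter (fun i => i-2 ∉ S ∧ i-4 ∉ S)).card * A +
      (S.filter (fun i => i+2 ∈ S ∧ i+4 ∉ S)).card * max b C +
      (S.filter (fun i => i+2 ∉ S ∧ i+4 ∉ S)).card * C := by
  have hR2 : S.filter (fun i => (i+4)-2 ∈ S ∧ (i+4) ∉ S) =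
      S.filter (fun i => i+2 ∈ S ∧ i+4 ∉ S) := by
    apply Finset.filter_congr
    intro i hi
    rw [show i+4-2 = i+2 by omega]
  have hR1 : S.filter (fun i => (i+4)-2 ∉ S ∧ (i+4) ∉ S) =
      S.filter (fun i => i+2 ∉ S ∧ i+4 ∉ S) := by
    apply Finset.filter_congr
    intro i hi
    rw [show i+4-2 = i+2 by omega]
  unfold kap
  rw [Finset.sum_add_distrib, Finset.sum_add_distrib, Finset.sum_add_distrib,
    sum_ind, sum_ind, sum_ind, sum_ind,
    class_L S n hS, class_L S n hS, class_R S n hS, class_R S n hS, hR2, hR1]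

lemma endswap (n A b C x y : ℕ) (h1x : 1 ≤ x)
    (hxA : x ≤ A) (hxC : x ≤ C) (hxb : x ≤ b)
    (hyA : y ≤ A) (hyC : y ≤ C) (hyb : y ≤ b)
    (S : Finset ℕ) (hS : S ⊆ Finset.Icc 1 (n-4)) :
    ∑ p ∈ Finset.Icc 1 n, dd C y b x A S p =
    ∑ p ∈ Finset.Icc 1 n, dd A y b x C S p := by
  have point : ∀ p, dd C y b x A S p + kap A b C S p =
      dd A y b x C S p + kap C b A S p := by
    intro p
    unfold dd kap
    by_cases h0 : p ∈ S <;> by_cases h4 : p-4 ∈ S <;> by_cases h2 : p-2 ∈ S <;>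
      by_cases h1 : p-1 ∈ S <;> by_cases h3 : p-3 ∈ S <;>
      simp only [h0, h1, h2, h3, h4, if_true, if_false, not_true, not_false_iff,
        true_and, false_and, and_true, and_false, if_neg, if_pos] <;>
      omega
  have hsum : ∑ p ∈ Finset.Icc 1 n, (dd C y b x A S p + kap A b C S p) =
      ∑ p ∈ Finset.Icc 1 n, (dd A y b x C S p + kap C b A S p) :=
    Finset.sum_congr rfl (fun p _ => point p)
  rw [Finset.sum_add_distrib, Finset.sum_add_distrib] at hsum
  have h0S : 0 ∉ S := by
    intro hc
    have := Finset.mem_Icc.mp (hS hc)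
    omega
  have hk := sum_kap n A b C S hS
  have hl := sum_kap n C b A S hS
  have e1 := cnt1 S h0S
  have e2 := cnt2 S h0S
  -- conclude
  have : ∑ p ∈ Finset.Icc 1 n, kap A b C S p =
      ∑ p ∈ Finset.Icc 1 n, kap C b A S p := by
    rw [hk, hl, e1, e2]
    ring
  omega

lemma max5_rev (a0 a1 a2 a3 a4 : ℕ) :
    max 1 (max a0 (max a1 (max a2 (max a3 a4)))) =
    max 1 (max a4 (max a3 (max a2 (max a1 a0)))) := by omega

lemma refl_mem (n : ℕ) (S : Finset ℕ) (hS : S ⊆ Finset.Icc 1 (n-4))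
    (p k : ℕ) (hp1 : 1 ≤ p) (hp2 : p ≤ n) (hk : k ≤ 4) :
    (p - k ∈ S.image (fun i => n-3-i)) ↔ ((n+1-p) - (4-k) ∈ S) := by
  rw [Finset.mem_image]
  constructor
  · rintro ⟨i, hi, hei⟩
    have hb := Finset.mem_Icc.mp (hS hi)
    have : (n+1-p) - (4-k) = i := by omega
    rwa [this]
  · intro hi
    have hb := Finset.mem_Icc.mp (hS hi)
    exact ⟨(n+1-p) - (4-k), hi, by omega⟩

lemma refl_sum (n P0 P1 P2 P3 P4 : ℕ) (S : Finset ℕ)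
    (hS : S ⊆ Finset.Icc 1 (n-4)) :
    ∑ p ∈ Finset.Icc 1 n, dd P0 P1 P2 P3 P4 (S.image (fun i => n-3-i)) p =
    ∑ p ∈ Finset.Icc 1 n, dd P4 P3 P2 P1 P0 S p := by
  apply Finset.sum_nbij' (fun p => n+1-p) (fun p => n+1-p)
  · intro p hp
    simp only [Finset.mem_Icc] at hp ⊢
    omega
  · intro p hp
    simp only [Finset.mem_Icc] at hp ⊢
    omega
  · intro p hp
    simp only [Finset.mem_Icc] at hp
    omega
  · intro p hp
    simp only [Finset.mem_Icc] at hp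
    omega
  · intro p hp
    simp only [Finset.mem_Icc] at hp
    obtain ⟨hp1, hp2⟩ := hp
    have h0 := refl_mem n S hS p 0 hp1 hp2 (by norm_num)
    have h1 := refl_mem n S hS p 1 hp1 hp2 (by norm_num)
    have h2 := refl_mem n S hS p 2 hp1 hp2 (by norm_num)
    have h3 := refl_mem n S hS p 3 hp1 hp2 (by norm_num)
    have h4 := refl_mem n S hS p 4 hp1 hp2 (by norm_num)
    simp only [Nat.sub_zero, show (4:ℕ)-1 = 3 from rfl, show (4:ℕ)-2 = 2 from rfl,
      show (4:ℕ)-3 = 1 from rfl, show (4:ℕ)-4 = 0 from rfl] at h0 h1 h2 h3 h4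
    unfold dd
    simp only [h0, h1, h2, h3, h4]
    exact max5_rev _ _ _ _ _

/-! new material -/

lemma eta_eq_card (P0 P1 P2 P3 P4 n : ℕ) (w : List ℕ) (hw : w.length = n) :
    eta [P0,P1,P2,P3,P4] w =
      ((Finset.Icc 1 (n-4)).filter (EmbedsAt [P0,P1,P2,P3,P4] w)).card := by
  unfold eta
  have hl : w.length + 1 - ([P0,P1,P2,P3,P4] : List ℕ).length = n - 4 := by
    simp only [List.length_cons, List.length_nil]
    omega
  rw [hl]

/-- Step 2: the marked-occurrence counts agree. -/
lemma A_eq (n m s : ℕ) (P0 P1 P2 P3 P4 : ℕ) :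
    ∑ w ∈ allW n m, (eta [P0,P1,P2,P3,P4] w).choose s =
    ∑ S ∈ (Finset.Icc 1 (n-4)).powersetCard s,
      ((allW n m).filter
        (fun w => ∀ p ∈ Finset.Icc 1 n, dd P0 P1 P2 P3 P4 S p ≤ Lw w p)).card := by
  have step1 : ∀ w ∈ allW n m, (eta [P0,P1,P2,P3,P4] w).choose s =
      ∑ S ∈ (Finset.Icc 1 (n-4)).powersetCard s,
        (if (∀ p ∈ Finset.Icc 1 n, dd P0 P1 P2 P3 P4 S p ≤ Lw w p) then 1 else 0) := by
    intro w hw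
    obtain ⟨hlen, hsum, hword⟩ := mem_allW.mp hw
    rw [eta_eq_card P0 P1 P2 P3 P4 n w hlen]
    set O := (Finset.Icc 1 (n-4)).filter (EmbedsAt [P0,P1,P2,P3,P4] w) with hO
    rw [← Finset.card_powersetCard]
    have hsub : O.powersetCard s =
        ((Finset.Icc 1 (n-4)).powersetCard s).filter (fun S => S ⊆ O) := by
      ext S
      simp only [Finset.mem_powersetCard, Finset.mem_filter]
      constructor
      · rintro ⟨h1, h2⟩
        exact ⟨⟨h1.trans (Finset.filter_subset _ _), h2⟩, h1⟩
      · rintro ⟨⟨-, h2⟩, h1⟩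
        exact ⟨h1, h2⟩
    rw [hsub, Finset.card_filter]
    apply Finset.sum_congr rfl
    intro S hS
    rw [Finset.mem_powersetCard] at hS
    congr 1
    have hiff : S ⊆ O ↔ ∀ p ∈ Finset.Icc 1 n, dd P0 P1 P2 P3 P4 S p ≤ Lw w p := by
      rw [← dominate_iff P0 P1 P2 P3 P4 n S hS.1 w hlen hword]
      constructor
      · intro h i hi
        exact (Finset.mem_filter.mp (h hi)).2
      · intro h i hi
        exact Finset.mem_filter.mpr ⟨hS.1 hi, h i hi⟩
    simp only [hiff]
  rw [Finset.sum_congr rfl step1, Finset.sum_comm]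
  apply Finset.sum_congr rfl
  intro S _
  rw [Finset.card_filter]

/-- the reflection bijection on marked sets. -/
lemma sum_card_eq (n m s : ℕ) (a b c x y : ℕ) (hx : 1 ≤ x) (hy : 1 ≤ y)
    (hxa : x ≤ a) (hxb : x ≤ b) (hxc : x ≤ c)
    (hya : y ≤ a) (hyb : y ≤ b) (hyc : y ≤ c) :
    ∑ S ∈ (Finset.Icc 1 (n-4)).powersetCard s,
      ((allW n m).filter
        (fun w => ∀ p ∈ Finset.Icc 1 n, dd a x b y c S p ≤ Lw w p)).card =
    ∑ S ∈ (Finset.Icc 1 (n-4)).powersetCard s,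
      ((allW n m).filter
        (fun w => ∀ p ∈ Finset.Icc 1 n, dd a y b x c S p ≤ Lw w p)).card := by
  have hmem : ∀ S ∈ (Finset.Icc 1 (n-4)).powersetCard s,
      S.image (fun i => n-3-i) ∈ (Finset.Icc 1 (n-4)).powersetCard s := by
    intro S hS
    rw [Finset.mem_powersetCard] at hS ⊢
    obtain ⟨hsub, hcard⟩ := hS
    constructor
    · intro j hj
      rw [Finset.mem_image] at hj
      obtain ⟨i, hi, rfl⟩ := hj
      have := Finset.mem_Icc.mp (hsub hi)
      rw [Finset.mem_Icc]
      omega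
    · rw [Finset.card_image_of_injOn, hcard]
      intro i₁ h₁ i₂ h₂ he
      have b₁ := Finset.mem_Icc.mp (hsub h₁)
      have b₂ := Finset.mem_Icc.mp (hsub h₂)
      dsimp only at he
      omega
  have hinv : ∀ S ∈ (Finset.Icc 1 (n-4)).powersetCard s,
      (S.image (fun i => n-3-i)).image (fun i => n-3-i) = S := by
    intro S hS
    rw [Finset.mem_powersetCard] at hS
    obtain ⟨hsub, -⟩ := hS
    rw [Finset.image_image]
    ext j
    rw [Finset.mem_image]
    constructor
    · rintro ⟨i, hi, rfl⟩
      have := Finset.mem_Icc.mp (hsub hi)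
      simp only [Function.comp_apply]
      rw [show n-3-(n-3-i) = i by omega]
      exact hi
    · intro hj
      refine ⟨j, hj, ?_⟩
      have := Finset.mem_Icc.mp (hsub hj)
      simp only [Function.comp_apply]
      omega
  apply Finset.sum_nbij' (fun S => S.image (fun i => n-3-i))
    (fun S => S.image (fun i => n-3-i)) hmem hmem hinv hinv
  intro S hS
  rw [Finset.mem_powersetCard] at hS
  obtain ⟨hsub, -⟩ := hS
  have hsubρ : S.image (fun i => n-3-i) ⊆ Finset.Icc 1 (n-4) := by
    intro j hj
    rw [Finset.mem_image] at hj
    obtain ⟨i, hi, rfl⟩ := hj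
    have := Finset.mem_Icc.mp (hsub hi)
    rw [Finset.mem_Icc]
    omega
  apply count_eq
  · exact fun p => one_le_dd _ _ _ _ _ _ _
  · exact fun p => one_le_dd _ _ _ _ _ _ _
  · exact ((refl_sum n a y b x c S hsub).trans
      (endswap n a b c y x hy hya hyc hyb hxa hxc hxb S hsub)).symm


/-- For positive `x, y` with `x, y ≤ a, b, c`, the words
`axbyc` and `aybxc` are strongly Wilf equivalent. -/
theorem axbyc_stronglyWilfEquiv_aybxc (a b c x y : ℕ)
    (hx : 1 ≤ x) (hy : 1 ≤ y)
    (hxa : x ≤ a) (hxb : x ≤ b) (hxc : x ≤ c)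
    (hya : y ≤ a) (hyb : y ≤ b) (hyc : y ≤ c) :
    StronglyWilfEquiv [a, x, b, y, c] [a, y, b, x, c] := by
  intro n m j
  -- set ↔ finset
  have hset : ∀ u : List ℕ,
      {w : List ℕ | IsWord w ∧ w.length = n ∧ w.sum = m ∧ eta u w = j} =
      ↑((allW n m).filter (fun w => eta u w = j)) := by
    intro u
    ext w
    simp only [Set.mem_setOf_eq, Finset.coe_filter, mem_allW]
    tauto
  rw [hset, hset, Set.ncard_coe_finset, Set.ncard_coe_finset]
  -- bound on eta
  have heta_le : ∀ (u : List ℕ) w, w ∈ allW n m → u = [a,x,b,y,c] ∨ u = [a,y,b,x,c] →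
      eta u w < n + 1 := by
    intro u w hw hu
    obtain ⟨hlen, -, -⟩ := mem_allW.mp hw
    have hu5 : u.length = 5 := by rcases hu with rfl | rfl <;> rfl
    have : eta u w ≤ ((Finset.Icc 1 (w.length + 1 - u.length)).card) :=
      Finset.card_filter_le _ _
    rw [Nat.card_Icc] at this
    omega
  by_cases hj : j < n + 1
  · refine binom_inv (n+1)
      (fun j' => ((allW n m).filter (fun w => eta [a,x,b,y,c] w = j')).card)
      (fun j' => ((allW n m).filter (fun w => eta [a,y,b,x,c] w = j')).card)
      ?_ j hj
    intro s
    have group : ∀ (u : List ℕ), (u = [a,x,b,y,c] ∨ u = [a,y,b,x,c]) →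
        ∑ j' ∈ Finset.range (n+1),
          ((allW n m).filter (fun w => eta u w = j')).card * (j'.choose s) =
        ∑ w ∈ allW n m, (eta u w).choose s := by
      intro u hu
      rw [← Finset.sum_fiberwise_of_maps_to
        (fun w hw => Finset.mem_range.mpr (heta_le u w hw hu))
        (fun w => (eta u w).choose s)]
      apply Finset.sum_congr rfl
      intro j' _
      rw [Finset.sum_congr rfl (fun w hw => by
        rw [(Finset.mem_filter.mp hw).2]), Finset.sum_const, smul_eq_mul]
    rw [group [a,x,b,y,c] (Or.inl rfl), group [a,y,b,x,c] (Or.inr rfl)]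
    rw [A_eq n m s a x b y c, A_eq n m s a y b x c]
    exact sum_card_eq n m s a b c x y hx hy hxa hxb hxc hya hyb hyc
  · -- j too large: both sides are 0
    have hempty : ∀ (u : List ℕ), (u = [a,x,b,y,c] ∨ u = [a,y,b,x,c]) →
        ((allW n m).filter (fun w => eta u w = j)) = ∅ := by
      intro u hu
      apply Finset.filter_false_of_mem
      intro w hw
      have := heta_le u w hw hu
      omega
    rw [hempty [a,x,b,y,c] (Or.inl rfl), hempty [a,y,b,x,c] (Or.inr rfl)]
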